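/- (Deterministic suboptimality bound under an uncertainty quantifier) Define recursively for h = H,…,1: V̂_{H+1} ≡ 0; Q̂_h(s,a) = min{ B̂_h(s,a) − Γ_h(s,a), H−h+1 }⁺; π̂_h(·|s) a point mass on an action maximizing Q̂_h(s,·); and V̂_h(s) = max_a Q̂_h(s,a), where B̂_h : S × A → ℝ and Γ_h : S × A → [0,∞) satisfy |B̂_h(s,a) − (𝔹_h V̂_{h+1})(s,a)| ≤ Γ_h(s,a) for all h, s, a. Let π* be a robust optimal Markov policy. Then for every s ∈ S there exists a kernel sequence P† = (P_1†,…,P_H†) with P_h† ∈ 𝒫_h such that SubOpt(π̂; s) ≤ 2 ∑_{h=1}^H E^{π*,P†}[ Γ_h(s_h,a_h) | s_1 = s ]. -/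

import Mathlib

open scoped BigOperators
open MeasureTheory

noncomputable section

/-- The probability simplex `Δ^{K-1} ⊆ ℝ^K`. -/
def probSimplex (K : ℕ) : Set (Fin K → ℝ) :=
  {α | (∀ k, 0 ≤ α k) ∧ ∑ k, α k = 1}

/-- Data of a group-linear DRMDP: shared simplex features `φ`, and for every step `h`,
coordinate `i` and site `k`, a reward factor `θ h i k ∈ [0,1]` and a probability
mass function `μ h i k` on the (finite) state space `S`. -/
structure DRMDP (S A : Type) [Fintype S] (H K d : ℕ) where
  φ : S → A → Fin d → ℝ
  φ_nonneg : ∀ s a i, 0 ≤ φ s a i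
  φ_sum : ∀ s a, ∑ i, φ s a i = 1
  θ : Fin H → Fin d → Fin K → ℝ
  θ_nonneg : ∀ h i k, 0 ≤ θ h i k
  θ_le_one : ∀ h i k, θ h i k ≤ 1
  μ : Fin H → Fin d → Fin K → S → ℝ
  μ_nonneg : ∀ h i k s', 0 ≤ μ h i k s'
  μ_sum : ∀ h i k, ∑ s', μ h i k s' = 1

namespace DRMDP

variable {S A : Type} [Fintype S] [Fintype A] {H K d : ℕ}

/-- Site-`k` transition kernel `P_h^k(s'|s,a) = ∑_i φ_i(s,a) μ_{h,i}^k(s')`. -/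
def Pk (M : DRMDP S A H K d) (h : Fin H) (k : Fin K) (s : S) (a : A) (s' : S) : ℝ :=
  ∑ i, M.φ s a i * M.μ h i k s'

/-- Site-`k` expected reward `r_h^k(s,a) = ∑_i φ_i(s,a) θ_{h,i}^k`. -/
def rk (M : DRMDP S A H K d) (h : Fin H) (k : Fin K) (s : S) (a : A) : ℝ :=
  ∑ i, M.φ s a i * M.θ h i k

/-- Membership `(P,r) ∈ U_h` in the d-rectangular feature-wise cross-site
convex-hull uncertainty set. -/
def inU (M : DRMDP S A H K d) (h : Fin H) (P : S → A → S → ℝ) (r : S → A → ℝ) : Prop :=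
  ∃ α : Fin d → Fin K → ℝ,
    (∀ i, α i ∈ probSimplex K) ∧
    (∀ s a, r s a = ∑ i, M.φ s a i * ∑ k, α i k * M.θ h i k) ∧
    (∀ s a s', P s a s' = ∑ i, M.φ s a i * ∑ k, α i k * M.μ h i k s')

/-- Membership `P ∈ 𝒫_h` (the transition kernels appearing in `U_h`). -/
def inP (M : DRMDP S A H K d) (h : Fin H) (P : S → A → S → ℝ) : Prop :=
  ∃ r, M.inU h P r

/-- The robust Bellman operator
`(𝔹_h V)(s,a) = inf_{(P,r) ∈ U_h} [ r(s,a) + ∑_{s'} P(s'|s,a) V(s') ]`. -/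
def bellman (M : DRMDP S A H K d) (h : Fin H) (V : S → ℝ) (s : S) (a : A) : ℝ :=
  sInf {x | ∃ P r, M.inU h P r ∧ x = r s a + ∑ s', P s a s' * V s'}

end DRMDP

/-- A Markov (possibly randomized) policy: `π h (·|s)` is a pmf on the actions. -/
def IsPolicy {S A : Type} [Fintype A] (H : ℕ) (π : Fin H → S → A → ℝ) : Prop :=
  ∀ h s, (∀ a, 0 ≤ π h s a) ∧ ∑ a, π h s a = 1

/-- `cumW H π P r t s` is the expected cumulative reward `W_t(s)` from (0-indexed)
step `t` on, under policy `π` and model sequence `(P,r)`; `W_t ≡ 0` for `t ≥ H`. -/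
def cumW {S A : Type} [Fintype S] [Fintype A] (H : ℕ)
    (π : Fin H → S → A → ℝ) (P : Fin H → S → A → S → ℝ) (r : Fin H → S → A → ℝ) :
    ℕ → S → ℝ
  | t =>
    if ht : t < H then
      fun s => ∑ a, π ⟨t, ht⟩ s a *
        (r ⟨t, ht⟩ s a + ∑ s', P ⟨t, ht⟩ s a s' * cumW H π P r (t + 1) s')
    else fun _ => 0
  termination_by t => H - t
  decreasing_by omega

namespace DRMDP

variable {S A : Type} [Fintype S] [Fintype A] {H K d : ℕ}

/-- Robust value function `V_t^π(s)`: worst case of `W_t(s)` over model sequences in `∏ U_h`. -/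
def robustV (M : DRMDP S A H K d) (π : Fin H → S → A → ℝ) (t : ℕ) (s : S) : ℝ :=
  sInf {x | ∃ P r, (∀ h : Fin H, M.inU h (P h) (r h)) ∧ x = cumW H π P r t s}

/-- Robust Q-function `Q_h^π(s,a)`. -/
def robustQ (M : DRMDP S A H K d) (π : Fin H → S → A → ℝ) (h : Fin H) (s : S) (a : A) : ℝ :=
  sInf {x | ∃ P r, (∀ t : Fin H, M.inU t (P t) (r t)) ∧
    x = r h s a + ∑ s', P h s a s' * cumW H π P r ((h : ℕ) + 1) s'}

/-- `πs` is a robust optimal Markov policy. -/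
def IsOptimalRobust (M : DRMDP S A H K d) (πs : Fin H → S → A → ℝ) : Prop :=
  IsPolicy H πs ∧ ∀ π, IsPolicy H π → ∀ (h : Fin H) (s : S),
    M.robustV π (h : ℕ) s ≤ M.robustV πs (h : ℕ) s

end DRMDP

/-- Step-`t` state distribution of the Markov chain started at `s₁`, following
policy `π` and transition kernels `P`. -/
def visit {S A : Type} [Fintype S] [Fintype A] [DecidableEq S] (H : ℕ)
    (π : Fin H → S → A → ℝ) (P : Fin H → S → A → S → ℝ) (s₁ : S) : ℕ → S → ℝ
  | 0 => fun s => if s = s₁ then 1 else 0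
  | t + 1 => fun s' =>
      if ht : t < H then
        ∑ s, ∑ a, visit H π P s₁ t s * π ⟨t, ht⟩ s a * P ⟨t, ht⟩ s a s'
      else 0

/-- `E^{π,P}[ f(s_h, a_h) | s_1 = s₁ ]` (0-indexed step `h`). -/
def expAt {S A : Type} [Fintype S] [Fintype A] [DecidableEq S] (H : ℕ)
    (π : Fin H → S → A → ℝ) (P : Fin H → S → A → S → ℝ) (s₁ : S)
    (h : Fin H) (f : S → A → ℝ) : ℝ :=
  ∑ s, ∑ a, visit H π P s₁ (h : ℕ) s * π h s a * f s a


set_option linter.unusedSectionVars false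
section Aux
variable {S A : Type} [Fintype S] [Fintype A] {H K d : ℕ}

lemma cumW_of_lt (π : Fin H → S → A → ℝ) (P : Fin H → S → A → S → ℝ)
    (r : Fin H → S → A → ℝ) {t : ℕ} (ht : t < H) (s : S) :
    cumW H π P r t s = ∑ a, π ⟨t, ht⟩ s a *
      (r ⟨t, ht⟩ s a + ∑ s', P ⟨t, ht⟩ s a s' * cumW H π P r (t + 1) s') := by
  rw [cumW]; simp [ht]

lemma cumW_of_ge (π : Fin H → S → A → ℝ) (P : Fin H → S → A → S → ℝ)
    (r : Fin H → S → A → ℝ) {t : ℕ} (ht : H ≤ t) (s : S) :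
    cumW H π P r t s = 0 := by
  rw [cumW]; simp [Nat.not_lt.mpr ht]

namespace DRMDP

lemma inU_P_nonneg {M : DRMDP S A H K d} {h : Fin H} {P : S → A → S → ℝ} {r : S → A → ℝ}
    (hU : M.inU h P r) : ∀ s a s', 0 ≤ P s a s' := by
  obtain ⟨α, hα, -, hP⟩ := hU
  intro s a s'
  rw [hP]
  refine Finset.sum_nonneg fun i _ => mul_nonneg (M.φ_nonneg s a i) ?_
  exact Finset.sum_nonneg fun k _ => mul_nonneg ((hα i).1 k) (M.μ_nonneg h i k s')

lemma inU_r_nonneg {M : DRMDP S A H K d} {h : Fin H} {P : S → A → S → ℝ} {r : S → A → ℝ}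
    (hU : M.inU h P r) : ∀ s a, 0 ≤ r s a := by
  obtain ⟨α, hα, hr, -⟩ := hU
  intro s a
  rw [hr]
  refine Finset.sum_nonneg fun i _ => mul_nonneg (M.φ_nonneg s a i) ?_
  exact Finset.sum_nonneg fun k _ => mul_nonneg ((hα i).1 k) (M.θ_nonneg h i k)

lemma inU_r_le_one {M : DRMDP S A H K d} {h : Fin H} {P : S → A → S → ℝ} {r : S → A → ℝ}
    (hU : M.inU h P r) : ∀ s a, r s a ≤ 1 := by
  obtain ⟨α, hα, hr, -⟩ := hU
  intro s a
  rw [hr]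
  calc ∑ i, M.φ s a i * ∑ k, α i k * M.θ h i k
      ≤ ∑ i, M.φ s a i * 1 := by
        refine Finset.sum_le_sum fun i _ => mul_le_mul_of_nonneg_left ?_ (M.φ_nonneg s a i)
        calc ∑ k, α i k * M.θ h i k ≤ ∑ k, α i k * 1 :=
              Finset.sum_le_sum fun k _ =>
                mul_le_mul_of_nonneg_left (M.θ_le_one h i k) ((hα i).1 k)
          _ = 1 := by simp [(hα i).2]
    _ = 1 := by simp [M.φ_sum s a]

/-- value identity for a member of `U_h`. -/
lemma inU_val {M : DRMDP S A H K d} {h : Fin H} {P : S → A → S → ℝ} {r : S → A → ℝ}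
    {α : Fin d → Fin K → ℝ}
    (hr : ∀ s a, r s a = ∑ i, M.φ s a i * ∑ k, α i k * M.θ h i k)
    (hP : ∀ s a s', P s a s' = ∑ i, M.φ s a i * ∑ k, α i k * M.μ h i k s')
    (V : S → ℝ) (s : S) (a : A) :
    r s a + ∑ s', P s a s' * V s' =
      ∑ i, M.φ s a i * ∑ k, α i k * (M.θ h i k + ∑ s', M.μ h i k s' * V s') := by
  have h2 : ∑ s', P s a s' * V s' =
      ∑ i, M.φ s a i * ∑ k, α i k * ∑ s', M.μ h i k s' * V s' := by
    calc ∑ s', P s a s' * V s'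
        = ∑ s', ∑ i, M.φ s a i * (∑ k, α i k * M.μ h i k s') * V s' := by
          refine Finset.sum_congr rfl fun s' _ => ?_
          rw [hP s a s', Finset.sum_mul]
      _ = ∑ i, ∑ s', M.φ s a i * (∑ k, α i k * M.μ h i k s') * V s' := Finset.sum_comm
      _ = ∑ i, M.φ s a i * ∑ s', (∑ k, α i k * M.μ h i k s') * V s' := by
          refine Finset.sum_congr rfl fun i _ => ?_
          rw [Finset.mul_sum]
          exact Finset.sum_congr rfl fun s' _ => by ring
      _ = ∑ i, M.φ s a i * ∑ k, α i k * ∑ s', M.μ h i k s' * V s' := by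
          refine Finset.sum_congr rfl fun i _ => ?_
          congr 1
          calc ∑ s', (∑ k, α i k * M.μ h i k s') * V s'
              = ∑ s', ∑ k, α i k * M.μ h i k s' * V s' := by
                refine Finset.sum_congr rfl fun s' _ => ?_
                rw [Finset.sum_mul]
                all_goals exact Finset.sum_congr rfl fun k _ => by ring
            _ = ∑ k, ∑ s', α i k * M.μ h i k s' * V s' := Finset.sum_comm
            _ = ∑ k, α i k * ∑ s', M.μ h i k s' * V s' := by
                refine Finset.sum_congr rfl fun k _ => ?_
                rw [Finset.mul_sum]
                all_goals exact Finset.sum_congr rfl fun s' _ => by ring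
  rw [hr s a, h2, ← Finset.sum_add_distrib]
  refine Finset.sum_congr rfl fun i _ => ?_
  rw [← mul_add, ← Finset.sum_add_distrib]
  congr 1
  refine Finset.sum_congr rfl fun k _ => ?_
  ring

lemma inU_P_sum {M : DRMDP S A H K d} {h : Fin H} {P : S → A → S → ℝ} {r : S → A → ℝ}
    (hU : M.inU h P r) : ∀ s a, ∑ s', P s a s' = 1 := by
  obtain ⟨α, hα, hr, hP⟩ := hU
  intro s a
  have h1 := inU_val (M := M) hr hP (fun _ => (1 : ℝ)) s a
  simp only [mul_one] at h1
  have h4 : r s a + ∑ s', P s a s' =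
      ∑ i, M.φ s a i * ∑ k, α i k * (M.θ h i k + 1) := by
    rw [h1]
    refine Finset.sum_congr rfl fun i _ => ?_
    congr 1
    refine Finset.sum_congr rfl fun k _ => ?_
    rw [M.μ_sum h i k]
  have h5 : ∀ i : Fin d, (∑ k, α i k * (M.θ h i k + 1)) = (∑ k, α i k * M.θ h i k) + 1 := by
    intro i
    have e : (∑ k, α i k * (M.θ h i k + 1)) = ∑ k, (α i k * M.θ h i k + α i k) :=
      Finset.sum_congr rfl fun k _ => by ring
    rw [e, Finset.sum_add_distrib, (hα i).2]
  have h6 : ∑ i, M.φ s a i * ∑ k, α i k * (M.θ h i k + 1) = r s a + 1 := by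
    calc ∑ i, M.φ s a i * ∑ k, α i k * (M.θ h i k + 1)
        = ∑ i, (M.φ s a i * ∑ k, α i k * M.θ h i k + M.φ s a i) := by
          refine Finset.sum_congr rfl fun i _ => ?_
          rw [h5 i]; ring
      _ = (∑ i, M.φ s a i * ∑ k, α i k * M.θ h i k) + ∑ i, M.φ s a i :=
          Finset.sum_add_distrib
      _ = r s a + 1 := by rw [← hr s a, M.φ_sum]
  rw [h6] at h4
  linarith

lemma pointmass_simplex {K : ℕ} (k0 : Fin K) :
    (fun k => if k = k0 then (1:ℝ) else 0) ∈ probSimplex K := by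
  constructor
  · intro k; dsimp only; split <;> norm_num
  · simp

lemma exists_inU (hK : 1 ≤ K) (M : DRMDP S A H K d) (h : Fin H) :
    ∃ P r, M.inU h P r := by
  refine ⟨_, _, ⟨fun _ k => if k = (⟨0, hK⟩ : Fin K) then (1:ℝ) else 0,
    fun _ => pointmass_simplex _, fun _ _ => rfl, fun _ _ _ => rfl⟩⟩

lemma bellman_set_nonempty (hK : 1 ≤ K) (M : DRMDP S A H K d) (h : Fin H)
    (V : S → ℝ) (s : S) (a : A) :
    {x | ∃ P r, M.inU h P r ∧ x = r s a + ∑ s', P s a s' * V s'}.Nonempty := by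
  obtain ⟨P, r, hU⟩ := exists_inU hK M h
  exact ⟨_, P, r, hU, rfl⟩

lemma bellman_set_bddBelow (M : DRMDP S A H K d) (h : Fin H)
    {V : S → ℝ} (hV : ∀ s', 0 ≤ V s') (s : S) (a : A) :
    BddBelow {x | ∃ P r, M.inU h P r ∧ x = r s a + ∑ s', P s a s' * V s'} := by
  refine ⟨0, fun x hx => ?_⟩
  obtain ⟨P, r, hU, rfl⟩ := hx
  have h1 : 0 ≤ r s a := inU_r_nonneg hU s a
  have h2 : 0 ≤ ∑ s', P s a s' * V s' :=
    Finset.sum_nonneg fun s' _ => mul_nonneg (inU_P_nonneg hU s a s') (hV s')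
  linarith

lemma bellman_nonneg (hK : 1 ≤ K) (M : DRMDP S A H K d) (h : Fin H)
    {V : S → ℝ} (hV : ∀ s', 0 ≤ V s') (s : S) (a : A) :
    0 ≤ M.bellman h V s a := by
  refine le_csInf (bellman_set_nonempty hK M h V s a) fun x hx => ?_
  obtain ⟨P, r, hU, rfl⟩ := hx
  have h1 : 0 ≤ r s a := inU_r_nonneg hU s a
  have h2 : 0 ≤ ∑ s', P s a s' * V s' :=
    Finset.sum_nonneg fun s' _ => mul_nonneg (inU_P_nonneg hU s a s') (hV s')
  linarith

lemma bellman_le_model (M : DRMDP S A H K d) (h : Fin H)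
    {V : S → ℝ} (hV : ∀ s', 0 ≤ V s') {P : S → A → S → ℝ} {r : S → A → ℝ}
    (hU : M.inU h P r) (s : S) (a : A) :
    M.bellman h V s a ≤ r s a + ∑ s', P s a s' * V s' :=
  csInf_le (bellman_set_bddBelow M h hV s a) ⟨P, r, hU, rfl⟩

/-- Existence of a simultaneous minimizer of the robust Bellman operator. -/
lemma exists_min_model (hK : 1 ≤ K) (M : DRMDP S A H K d) (h : Fin H) (V : S → ℝ) :
    ∃ P r, M.inU h P r ∧ ∀ s a,
      r s a + ∑ s', P s a s' * V s' ≤ M.bellman h V s a := by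
  set g : Fin d → Fin K → ℝ := fun i k => M.θ h i k + ∑ s', M.μ h i k s' * V s' with hg
  have hmin : ∀ i : Fin d, ∃ km : Fin K, ∀ k, g i km ≤ g i k := by
    intro i
    obtain ⟨km, -, hkm⟩ := Finset.exists_min_image Finset.univ (g i)
      ⟨⟨0, hK⟩, Finset.mem_univ _⟩
    exact ⟨km, fun k => hkm k (Finset.mem_univ k)⟩
  choose k0 hk0 using hmin
  set α : Fin d → Fin K → ℝ := fun i k => if k = k0 i then 1 else 0 with hα
  have hαs : ∀ i, α i ∈ probSimplex K := fun i => pointmass_simplex (k0 i)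
  set r : S → A → ℝ := fun s a => ∑ i, M.φ s a i * ∑ k, α i k * M.θ h i k with hrdef
  set P : S → A → S → ℝ :=
    fun s a s' => ∑ i, M.φ s a i * ∑ k, α i k * M.μ h i k s' with hPdef
  have hU : M.inU h P r := ⟨α, hαs, fun _ _ => rfl, fun _ _ _ => rfl⟩
  have hval : ∀ s a, r s a + ∑ s', P s a s' * V s' = ∑ i, M.φ s a i * g i (k0 i) := by
    intro s a
    rw [inU_val (M := M) (fun _ _ => rfl) (fun _ _ _ => rfl) V s a]
    refine Finset.sum_congr rfl fun i _ => ?_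
    congr 1
    have : ∀ k, α i k * g i k = if k = k0 i then g i k else 0 := by
      intro k; rw [hα]; dsimp only; split <;> simp
    rw [Finset.sum_congr rfl fun k _ => this k, Finset.sum_ite_eq' Finset.univ (k0 i)]
    simp [hg]
  refine ⟨P, r, hU, fun s a => ?_⟩
  refine le_csInf (bellman_set_nonempty hK M h V s a) fun x hx => ?_
  obtain ⟨P', r', ⟨α', hα', hr', hP'⟩, rfl⟩ := hx
  rw [hval s a, inU_val (M := M) hr' hP' V s a]
  refine Finset.sum_le_sum fun i _ => mul_le_mul_of_nonneg_left ?_ (M.φ_nonneg s a i)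
  calc g i (k0 i) = ∑ k, α' i k * g i (k0 i) := by
        rw [← Finset.sum_mul, (hα' i).2, one_mul]
    _ ≤ ∑ k, α' i k * g i k :=
        Finset.sum_le_sum fun k _ => mul_le_mul_of_nonneg_left (hk0 i k) ((hα' i).1 k)

end DRMDP
end Aux

section Aux2
variable {S A : Type} [Fintype S] [Fintype A] {H K d : ℕ}

lemma cumW_nonneg {π : Fin H → S → A → ℝ} {P : Fin H → S → A → S → ℝ}
    {r : Fin H → S → A → ℝ} (hπ : ∀ h s a, 0 ≤ π h s a)
    (hr : ∀ h s a, 0 ≤ r h s a) (hP : ∀ h s a s', 0 ≤ P h s a s') :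
    ∀ t s, 0 ≤ cumW H π P r t s := by
  have key : ∀ n t, H ≤ t + n → ∀ s, 0 ≤ cumW H π P r t s := by
    intro n
    induction n with
    | zero => intro t ht s; rw [cumW_of_ge _ _ _ (by omega)]
    | succ n ih =>
      intro t ht s
      by_cases ht' : t < H
      · rw [cumW_of_lt _ _ _ ht']
        refine Finset.sum_nonneg fun a _ => mul_nonneg (hπ _ s a) ?_
        refine add_nonneg (hr _ s a) (Finset.sum_nonneg fun s' _ => ?_)
        exact mul_nonneg (hP _ s a s') (ih (t+1) (by omega) s')
      · rw [cumW_of_ge _ _ _ (by omega)]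
  exact fun t s => key H t (by omega) s

variable [DecidableEq S]

lemma visit_zero (π : Fin H → S → A → ℝ) (P : Fin H → S → A → S → ℝ) (s₁ s : S) :
    visit H π P s₁ 0 s = if s = s₁ then 1 else 0 := rfl

lemma visit_succ_of_lt (π : Fin H → S → A → ℝ) (P : Fin H → S → A → S → ℝ)
    (s₁ : S) {t : ℕ} (ht : t < H) (s' : S) :
    visit H π P s₁ (t+1) s' =
      ∑ s, ∑ a, visit H π P s₁ t s * π ⟨t, ht⟩ s a * P ⟨t, ht⟩ s a s' := by
  simp [visit, ht]

lemma visit_nonneg {π : Fin H → S → A → ℝ} {P : Fin H → S → A → S → ℝ}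
    (hπ : ∀ h s a, 0 ≤ π h s a) (hP : ∀ h s a s', 0 ≤ P h s a s') (s₁ : S) :
    ∀ t s, 0 ≤ visit H π P s₁ t s := by
  intro t
  induction t with
  | zero => intro s; rw [visit_zero]; split <;> norm_num
  | succ t ih =>
    intro s'
    by_cases ht : t < H
    · rw [visit_succ_of_lt _ _ _ ht]
      refine Finset.sum_nonneg fun s _ => Finset.sum_nonneg fun a _ => ?_
      exact mul_nonneg (mul_nonneg (ih s) (hπ _ s a)) (hP _ s a s')
    · show (0:ℝ) ≤ visit H π P s₁ (t+1) s'
      simp [visit, ht]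

end Aux2

/-- Deterministic suboptimality bound under a (pointwise) uncertainty
quantifier: with the pessimistic recursion
`Q̂_h = min{B̂_h − Γ_h, H−h+1}⁺`, `V̂_h(s) = max_a Q̂_h(s,a)`, `π̂` greedy, and
`|B̂_h − 𝔹_h V̂_{h+1}| ≤ Γ_h`, for every initial state `s₁` there exists a kernel
sequence `P† ∈ ∏_h 𝒫_h` such that
`SubOpt(π̂; s₁) ≤ 2 ∑_h E^{π*,P†}[Γ_h(s_h,a_h) | s_1 = s₁]`. -/
theorem stmt_9 {S A : Type} [Fintype S] [Fintype A] [DecidableEq S]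
    [Nonempty A] [DecidableEq A]
    {H K d : ℕ} (hK : 1 ≤ K) (M : DRMDP S A H K d)
    (Bhat Γ : Fin H → S → A → ℝ)
    (hΓ : ∀ h s a, 0 ≤ Γ h s a)
    (Qhat : Fin H → S → A → ℝ)
    (hQhat : ∀ (h : Fin H) (s : S) (a : A),
      Qhat h s a = max (min (Bhat h s a - Γ h s a) ((H : ℝ) - ((h : ℕ) : ℝ))) 0)
    (Vhat : ℕ → S → ℝ)
    (hVhat : ∀ (t : ℕ) (ht : t < H) (s : S),
      Vhat t s = Finset.univ.sup' Finset.univ_nonempty (fun a => Qhat ⟨t, ht⟩ s a))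
    (hVhat0 : ∀ t : ℕ, H ≤ t → ∀ s, Vhat t s = 0)
    (hBhat : ∀ (h : Fin H) (s : S) (a : A),
      |Bhat h s a - M.bellman h (Vhat ((h : ℕ) + 1)) s a| ≤ Γ h s a)
    (πhat : Fin H → S → A → ℝ)
    (hπhat : ∀ (h : Fin H) (s : S), ∃ a₀ : A,
      (∀ a, Qhat h s a ≤ Qhat h s a₀) ∧
      ∀ a, πhat h s a = if a = a₀ then (1 : ℝ) else 0)
    (πstar : Fin H → S → A → ℝ) (hopt : M.IsOptimalRobust πstar) :
    ∀ s₁ : S, ∃ Pd : Fin H → S → A → S → ℝ,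
      (∀ h : Fin H, M.inP h (Pd h)) ∧
      M.robustV πstar 0 s₁ - M.robustV πhat 0 s₁ ≤
        2 * ∑ h : Fin H, expAt H πstar Pd s₁ h (fun s a => Γ h s a) := by
  intro s₁
  obtain ⟨hπs_pol, -⟩ := hopt
  -- basic facts about V̂
  have hVnn : ∀ t s, 0 ≤ Vhat t s := by
    intro t s
    by_cases ht : t < H
    · rw [hVhat t ht s]
      have a := Classical.arbitrary A
      refine le_trans ?_ (Finset.le_sup' _ (Finset.mem_univ a))
      rw [hQhat]; exact le_max_right _ _
    · rw [hVhat0 t (le_of_not_gt ht)]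
  have hVub : ∀ t, t ≤ H → ∀ s, Vhat t s ≤ (H : ℝ) - t := by
    intro t htH s
    have h0 : (0:ℝ) ≤ (H : ℝ) - t := by
      have : (t:ℝ) ≤ (H:ℝ) := Nat.cast_le.2 htH
      linarith
    by_cases ht : t < H
    · rw [hVhat t ht s]
      refine Finset.sup'_le _ _ fun a _ => ?_
      rw [hQhat]
      exact max_le (min_le_right _ _) h0
    · rw [hVhat0 t (le_of_not_gt ht)]; exact h0
  -- Q̂ ≤ robust Bellman of V̂
  have hQleB : ∀ (h : Fin H) (s : S) (a : A),
      Qhat h s a ≤ M.bellman h (Vhat ((h:ℕ)+1)) s a := by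
    intro h s a
    rw [hQhat]
    refine max_le ?_ (DRMDP.bellman_nonneg hK M h (fun s' => hVnn _ s') s a)
    refine le_trans (min_le_left _ _) ?_
    have habs := abs_le.1 (hBhat h s a)
    linarith [habs.1]
  -- choose the minimizing model at every step
  choose Pd rd hUd hmind using fun h : Fin H =>
    DRMDP.exists_min_model hK M h (Vhat ((h:ℕ)+1))
  have hPdnn : ∀ (h : Fin H) s a s', 0 ≤ Pd h s a s' :=
    fun h s a s' => DRMDP.inU_P_nonneg (hUd h) s a s'
  have hπsnn : ∀ (h : Fin H) s a, 0 ≤ πstar h s a := fun h s a => (hπs_pol h s).1 a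
  -- Q̂ ≥ model value − 2Γ
  have hQge : ∀ (h : Fin H) (s : S) (a : A),
      rd h s a + ∑ s', Pd h s a s' * Vhat ((h:ℕ)+1) s' - 2 * Γ h s a ≤ Qhat h s a := by
    intro h s a
    rw [hQhat]
    refine le_trans (le_min ?_ ?_) (le_max_left _ _)
    · have hb := hmind h s a
      have habs := abs_le.1 (hBhat h s a)
      have hg := hΓ h s a
      linarith [habs.2]
    · have h1 : rd h s a ≤ 1 := DRMDP.inU_r_le_one (hUd h) s a
      have h2 : ∑ s', Pd h s a s' * Vhat ((h:ℕ)+1) s' ≤ (H:ℝ) - (((h:ℕ)+1 : ℕ) : ℝ) := by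
        calc ∑ s', Pd h s a s' * Vhat ((h:ℕ)+1) s'
            ≤ ∑ s', Pd h s a s' * ((H:ℝ) - (((h:ℕ)+1 : ℕ) : ℝ)) :=
              Finset.sum_le_sum fun s' _ =>
                mul_le_mul_of_nonneg_left (hVub _ h.isLt s') (hPdnn h s a s')
          _ = (H:ℝ) - (((h:ℕ)+1 : ℕ) : ℝ) := by
              rw [← Finset.sum_mul, DRMDP.inU_P_sum (hUd h) s a, one_mul]
      have hg := hΓ h s a
      push_cast at h2
      linarith
  -- π̂ is a policy
  have hπhat_pol : IsPolicy H πhat := by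
    intro h s
    obtain ⟨a₀, -, hpm⟩ := hπhat h s
    constructor
    · intro a; rw [hpm a]; split <;> norm_num
    · simp only [hpm]
      rw [Finset.sum_ite_eq' Finset.univ a₀ (fun _ => (1:ℝ))]
      simp
  -- pessimism: V̂ lower bounds the π̂-value under every admissible model
  have mainA : ∀ (P : Fin H → S → A → S → ℝ) (r : Fin H → S → A → ℝ),
      (∀ h : Fin H, M.inU h (P h) (r h)) →
      ∀ t s, Vhat t s ≤ cumW H πhat P r t s := by
    intro P r hU
    have key : ∀ n t, H ≤ t + n → ∀ s, Vhat t s ≤ cumW H πhat P r t s := by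
      intro n
      induction n with
      | zero => intro t ht s; rw [hVhat0 t (by omega), cumW_of_ge _ _ _ (by omega)]
      | succ n ih =>
        intro t ht s
        by_cases ht' : t < H
        · rw [cumW_of_lt _ _ _ ht']
          obtain ⟨a₀, ha₀max, hpm⟩ := hπhat ⟨t, ht'⟩ s
          have hsum : ∑ a, πhat ⟨t,ht'⟩ s a *
              (r ⟨t,ht'⟩ s a + ∑ s', P ⟨t,ht'⟩ s a s' * cumW H πhat P r (t+1) s')
              = r ⟨t,ht'⟩ s a₀ + ∑ s', P ⟨t,ht'⟩ s a₀ s' * cumW H πhat P r (t+1) s' := by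
            have e : ∀ a : A, πhat ⟨t,ht'⟩ s a *
                (r ⟨t,ht'⟩ s a + ∑ s', P ⟨t,ht'⟩ s a s' * cumW H πhat P r (t+1) s')
                = if a = a₀ then
                    (r ⟨t,ht'⟩ s a + ∑ s', P ⟨t,ht'⟩ s a s' * cumW H πhat P r (t+1) s')
                  else 0 := by
              intro a; rw [hpm a]; split <;> simp
            rw [Finset.sum_congr rfl fun a _ => e a, Finset.sum_ite_eq' Finset.univ a₀]
            simp
          rw [hsum]
          have hVQ : Vhat t s = Qhat ⟨t,ht'⟩ s a₀ := by
            rw [hVhat t ht' s]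
            exact le_antisymm (Finset.sup'_le _ _ fun a _ => ha₀max a)
              (Finset.le_sup' _ (Finset.mem_univ a₀))
          rw [hVQ]
          calc Qhat ⟨t,ht'⟩ s a₀ ≤ M.bellman ⟨t,ht'⟩ (Vhat (t+1)) s a₀ := hQleB ⟨t,ht'⟩ s a₀
            _ ≤ r ⟨t,ht'⟩ s a₀ + ∑ s', P ⟨t,ht'⟩ s a₀ s' * Vhat (t+1) s' :=
                DRMDP.bellman_le_model M _ (fun s' => hVnn _ s') (hU _) s a₀
            _ ≤ r ⟨t,ht'⟩ s a₀ + ∑ s', P ⟨t,ht'⟩ s a₀ s' * cumW H πhat P r (t+1) s' := by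
                refine add_le_add_right (Finset.sum_le_sum fun s' _ => ?_) _
                exact mul_le_mul_of_nonneg_left (ih (t+1) (by omega) s')
                  (DRMDP.inU_P_nonneg (hU _) s a₀ s')
        · rw [hVhat0 t (by omega), cumW_of_ge _ _ _ (by omega)]
    exact fun t s => key H t (by omega) s
  -- lower bound on robustV π̂
  have hlow : Vhat 0 s₁ ≤ M.robustV πhat 0 s₁ := by
    refine le_csInf ?_ ?_
    · choose P0 r0 hU0 using fun h : Fin H => DRMDP.exists_inU hK M h
      exact ⟨_, P0, r0, hU0, rfl⟩
    · rintro x ⟨P, r, hU, rfl⟩; exact mainA P r hU 0 s₁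
  -- upper bound on robustV π*
  have hup : M.robustV πstar 0 s₁ ≤ cumW H πstar Pd rd 0 s₁ := by
    refine csInf_le ⟨0, ?_⟩ ⟨Pd, rd, hUd, rfl⟩
    rintro x ⟨P, r, hU, rfl⟩
    exact cumW_nonneg hπsnn (fun h s a => DRMDP.inU_r_nonneg (hU h) s a)
      (fun h s a s' => DRMDP.inU_P_nonneg (hU h) s a s') 0 s₁
  -- one-step recursion for the gap
  set D : ℕ → S → ℝ := fun t s => cumW H πstar Pd rd t s - Vhat t s with hD
  have hB1 : ∀ (t : ℕ) (ht : t < H) (s : S),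
      D t s ≤ ∑ a, πstar ⟨t,ht⟩ s a * (2 * Γ ⟨t,ht⟩ s a +
        ∑ s', Pd ⟨t,ht⟩ s a s' * D (t+1) s') := by
    intro t ht s
    have hπ1 := hπs_pol ⟨t,ht⟩ s
    have hV : ∑ a, πstar ⟨t,ht⟩ s a * Qhat ⟨t,ht⟩ s a ≤ Vhat t s := by
      calc ∑ a, πstar ⟨t,ht⟩ s a * Qhat ⟨t,ht⟩ s a
          ≤ ∑ a, πstar ⟨t,ht⟩ s a * Vhat t s := Finset.sum_le_sum fun a _ =>
            mul_le_mul_of_nonneg_left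
              (by rw [hVhat t ht s]; exact Finset.le_sup' _ (Finset.mem_univ a)) (hπ1.1 a)
        _ = Vhat t s := by rw [← Finset.sum_mul, hπ1.2, one_mul]
    have hterm : ∀ a : A, πstar ⟨t,ht⟩ s a *
        (rd ⟨t,ht⟩ s a + ∑ s', Pd ⟨t,ht⟩ s a s' * cumW H πstar Pd rd (t+1) s')
        - πstar ⟨t,ht⟩ s a * Qhat ⟨t,ht⟩ s a
        ≤ πstar ⟨t,ht⟩ s a * (2 * Γ ⟨t,ht⟩ s a +
            ∑ s', Pd ⟨t,ht⟩ s a s' * D (t+1) s') := by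
      intro a
      have hq := hQge ⟨t,ht⟩ s a
      have expand : ∑ s', Pd ⟨t,ht⟩ s a s' * D (t+1) s' =
          (∑ s', Pd ⟨t,ht⟩ s a s' * cumW H πstar Pd rd (t+1) s')
          - ∑ s', Pd ⟨t,ht⟩ s a s' * Vhat (t+1) s' := by
        rw [← Finset.sum_sub_distrib]
        exact Finset.sum_congr rfl fun s' _ => by rw [hD]; ring
      rw [← mul_sub]
      refine mul_le_mul_of_nonneg_left ?_ (hπ1.1 a)
      rw [expand]
      have : (⟨t,ht⟩ : Fin H).val = t := rfl
      simp only [this] at hq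
      linarith
    calc D t s = cumW H πstar Pd rd t s - Vhat t s := by rw [hD]
      _ ≤ (∑ a, πstar ⟨t,ht⟩ s a *
            (rd ⟨t,ht⟩ s a + ∑ s', Pd ⟨t,ht⟩ s a s' * cumW H πstar Pd rd (t+1) s'))
          - ∑ a, πstar ⟨t,ht⟩ s a * Qhat ⟨t,ht⟩ s a := by
            rw [cumW_of_lt _ _ _ ht]; linarith
      _ = ∑ a, (πstar ⟨t,ht⟩ s a *
            (rd ⟨t,ht⟩ s a + ∑ s', Pd ⟨t,ht⟩ s a s' * cumW H πstar Pd rd (t+1) s')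
            - πstar ⟨t,ht⟩ s a * Qhat ⟨t,ht⟩ s a) := by rw [Finset.sum_sub_distrib]
      _ ≤ _ := Finset.sum_le_sum fun a _ => hterm a
  -- visit-weighted recursion
  have hvnn : ∀ t s, 0 ≤ visit H πstar Pd s₁ t s :=
    visit_nonneg hπsnn hPdnn s₁
  have hstep : ∀ t (ht : t < H),
      ∑ s, visit H πstar Pd s₁ t s * D t s ≤
        2 * expAt H πstar Pd s₁ ⟨t,ht⟩ (fun s a => Γ ⟨t,ht⟩ s a)
        + ∑ s', visit H πstar Pd s₁ (t+1) s' * D (t+1) s' := by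
    intro t ht
    have step1 : ∑ s, visit H πstar Pd s₁ t s * D t s ≤
        ∑ s, ∑ a, visit H πstar Pd s₁ t s * πstar ⟨t,ht⟩ s a *
          (2 * Γ ⟨t,ht⟩ s a + ∑ s', Pd ⟨t,ht⟩ s a s' * D (t+1) s') := by
      refine Finset.sum_le_sum fun s _ => ?_
      calc visit H πstar Pd s₁ t s * D t s
          ≤ visit H πstar Pd s₁ t s * ∑ a, πstar ⟨t,ht⟩ s a *
              (2 * Γ ⟨t,ht⟩ s a + ∑ s', Pd ⟨t,ht⟩ s a s' * D (t+1) s') :=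
            mul_le_mul_of_nonneg_left (hB1 t ht s) (hvnn t s)
        _ = ∑ a, visit H πstar Pd s₁ t s * πstar ⟨t,ht⟩ s a *
              (2 * Γ ⟨t,ht⟩ s a + ∑ s', Pd ⟨t,ht⟩ s a s' * D (t+1) s') := by
            rw [Finset.mul_sum]
            exact Finset.sum_congr rfl fun a _ => by ring
    have step2 : ∑ s, ∑ a, visit H πstar Pd s₁ t s * πstar ⟨t,ht⟩ s a *
          (2 * Γ ⟨t,ht⟩ s a + ∑ s', Pd ⟨t,ht⟩ s a s' * D (t+1) s')
        = 2 * expAt H πstar Pd s₁ ⟨t,ht⟩ (fun s a => Γ ⟨t,ht⟩ s a)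
          + ∑ s', visit H πstar Pd s₁ (t+1) s' * D (t+1) s' := by
      have e1 : ∀ (s : S) (a : A), visit H πstar Pd s₁ t s * πstar ⟨t,ht⟩ s a *
          (2 * Γ ⟨t,ht⟩ s a + ∑ s', Pd ⟨t,ht⟩ s a s' * D (t+1) s')
          = 2 * (visit H πstar Pd s₁ t s * πstar ⟨t,ht⟩ s a * Γ ⟨t,ht⟩ s a)
            + ∑ s', visit H πstar Pd s₁ t s * πstar ⟨t,ht⟩ s a * Pd ⟨t,ht⟩ s a s' * D (t+1) s' := by
        intro s a
        rw [mul_add, Finset.mul_sum]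
        congr 1
        · ring
        · exact Finset.sum_congr rfl fun s' _ => by ring
      calc ∑ s, ∑ a, visit H πstar Pd s₁ t s * πstar ⟨t,ht⟩ s a *
            (2 * Γ ⟨t,ht⟩ s a + ∑ s', Pd ⟨t,ht⟩ s a s' * D (t+1) s')
          = ∑ s, ∑ a, (2 * (visit H πstar Pd s₁ t s * πstar ⟨t,ht⟩ s a * Γ ⟨t,ht⟩ s a)
            + ∑ s', visit H πstar Pd s₁ t s * πstar ⟨t,ht⟩ s a * Pd ⟨t,ht⟩ s a s' * D (t+1) s') := by
            exact Finset.sum_congr rfl fun s _ => Finset.sum_congr rfl fun a _ => e1 s a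
        _ = (∑ s, ∑ a, 2 * (visit H πstar Pd s₁ t s * πstar ⟨t,ht⟩ s a * Γ ⟨t,ht⟩ s a))
            + ∑ s, ∑ a, ∑ s', visit H πstar Pd s₁ t s * πstar ⟨t,ht⟩ s a * Pd ⟨t,ht⟩ s a s' * D (t+1) s' := by
            rw [← Finset.sum_add_distrib]
            exact Finset.sum_congr rfl fun s _ => Finset.sum_add_distrib
        _ = 2 * expAt H πstar Pd s₁ ⟨t,ht⟩ (fun s a => Γ ⟨t,ht⟩ s a)
            + ∑ s', visit H πstar Pd s₁ (t+1) s' * D (t+1) s' := by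
            congr 1
            · rw [expAt, Finset.mul_sum]
              exact Finset.sum_congr rfl fun s _ => by rw [Finset.mul_sum]
            · calc ∑ s, ∑ a, ∑ s', visit H πstar Pd s₁ t s * πstar ⟨t,ht⟩ s a * Pd ⟨t,ht⟩ s a s' * D (t+1) s'
                  = ∑ s, ∑ s', ∑ a, visit H πstar Pd s₁ t s * πstar ⟨t,ht⟩ s a * Pd ⟨t,ht⟩ s a s' * D (t+1) s' :=
                    Finset.sum_congr rfl fun s _ => Finset.sum_comm
                _ = ∑ s', ∑ s, ∑ a, visit H πstar Pd s₁ t s * πstar ⟨t,ht⟩ s a * Pd ⟨t,ht⟩ s a s' * D (t+1) s' :=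
                    Finset.sum_comm
                _ = ∑ s', visit H πstar Pd s₁ (t+1) s' * D (t+1) s' := by
                    refine Finset.sum_congr rfl fun s' _ => ?_
                    rw [visit_succ_of_lt _ _ _ ht, Finset.sum_mul]
                    refine Finset.sum_congr rfl fun s _ => ?_
                    rw [Finset.sum_mul]
    linarith [step1, le_of_eq step2]
  -- telescoping
  set f : ℕ → ℝ := fun t =>
    if ht : t < H then expAt H πstar Pd s₁ ⟨t,ht⟩ (fun s a => Γ ⟨t,ht⟩ s a) else 0 with hf
  have htel : ∀ m, m ≤ H →
      ∑ s, visit H πstar Pd s₁ 0 s * D 0 s ≤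
        2 * (∑ t ∈ Finset.range m, f t) + ∑ s, visit H πstar Pd s₁ m s * D m s := by
    intro m
    induction m with
    | zero => intro _; simp
    | succ m ih =>
      intro hm
      have h1 := ih (by omega)
      have h2 := hstep m (by omega)
      rw [Finset.sum_range_succ]
      have : f m = expAt H πstar Pd s₁ ⟨m, by omega⟩ (fun s a => Γ ⟨m, by omega⟩ s a) := by
        rw [hf]; simp only [dif_pos (show m < H by omega)]
      rw [this]
      linarith
  have hDend : ∀ s, D H s = 0 := by
    intro s
    rw [hD]
    simp only
    rw [cumW_of_ge _ _ _ le_rfl, hVhat0 H le_rfl]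
    ring
  have hstart : ∑ s, visit H πstar Pd s₁ 0 s * D 0 s = D 0 s₁ := by
    have e : ∀ s : S, visit H πstar Pd s₁ 0 s * D 0 s
        = if s = s₁ then D 0 s else 0 := by
      intro s; rw [visit_zero]; split <;> simp
    rw [Finset.sum_congr rfl fun s _ => e s, Finset.sum_ite_eq' Finset.univ s₁]
    simp
  have hfin : ∑ t ∈ Finset.range H, f t =
      ∑ h : Fin H, expAt H πstar Pd s₁ h (fun s a => Γ h s a) := by
    rw [← Fin.sum_univ_eq_sum_range]
    refine Finset.sum_congr rfl fun h _ => ?_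
    rw [hf]
    simp only [dif_pos h.isLt]
  have hfinal := htel H le_rfl
  rw [hstart] at hfinal
  have htail : ∑ s, visit H πstar Pd s₁ H s * D H s = 0 := by
    refine Finset.sum_eq_zero fun s _ => ?_
    rw [hDend s, mul_zero]
  rw [htail, hfin] at hfinal
  refine ⟨Pd, fun h => ⟨rd h, hUd h⟩, ?_⟩
  have hD0 : D 0 s₁ = cumW H πstar Pd rd 0 s₁ - Vhat 0 s₁ := by rw [hD]
  rw [hD0] at hfinal
  linarith

end
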